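/- arXiv:1001.3927 — 3 statements merged into one kernel-verified Lean document; each statement's English description precedes it below -/
import Mathlib

section
/- Let (A, H, D) be a spectral triple and P := |D|. If T is an H_P^∞-bounded operator such that T ∈ ⋂_{n∈ℕ} Dom(δ'ⁿ), where δ'(T) := [|D|, T] acting on H_P^∞, then the bounded closure T̄ of T belongs to ⋂_{n∈ℕ} Dom(δⁿ), where δ(S) is the closure of [|D|, S] for bounded S preserving Dom(D), and δ(T̄) equals the closure of δ'(T). -/
noncomputable section

variable {H : Type*} [NormedAddCommGroup H] [InnerProductSpace ℂ H] [CompleteSpace H]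

open Classical in
/-- Application of a partially defined operator, extended by `0` outside its domain. -/
def papp (P : H →ₗ.[ℂ] H) (x : H) : H := if h : x ∈ P.domain then P ⟨x, h⟩ else 0

/-- The domain of the `k`-th power of a partially defined operator `P`. -/
def pdom (P : H →ₗ.[ℂ] H) (k : ℕ) : Set H := {x | ∀ j < k, (papp P)^[j] x ∈ P.domain}

/-- The smooth domain `H_P^∞ := ⋂_{k≥1} Dom(P^k)`. -/
def smoothDom (P : H →ₗ.[ℂ] H) : Set H := ⋂ k ∈ {k : ℕ | 1 ≤ k}, pdom P k

/-- `H_P^∞`-bounded operators: maps of `H_P^∞` into itself, linear and norm-bounded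
on `H_P^∞`. -/
def IsSmoothBounded (P : H →ₗ.[ℂ] H) (t : H → H) : Prop :=
  (∀ x ∈ smoothDom P, t x ∈ smoothDom P) ∧
  (∀ x ∈ smoothDom P, ∀ y ∈ smoothDom P, t (x + y) = t x + t y) ∧
  (∀ (c : ℂ), ∀ x ∈ smoothDom P, t (c • x) = c • t x) ∧
  (∃ C : ℝ, ∀ x ∈ smoothDom P, ‖t x‖ ≤ C * ‖x‖)

/-- The commutator `δ'(S) = [|D|, S]` on the smooth domain (with junk values outside). -/
def commP (P : H →ₗ.[ℂ] H) (S : H → H) : H → H :=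
  fun x => papp P (S x) - S (papp P x)

set_option linter.unusedSectionVars false
set_option maxHeartbeats 1000000
set_option synthInstance.maxHeartbeats 400000

namespace L131
variable (P : H →ₗ.[ℂ] H)

theorem papp_of_mem {x : H} (h : x ∈ P.domain) : papp P x = P ⟨x, h⟩ := dif_pos h

theorem papp_zero : papp P 0 = 0 := by
  rw [papp_of_mem P P.domain.zero_mem]
  exact P.toFun.map_zero

theorem papp_add {x y : H} (hx : x ∈ P.domain) (hy : y ∈ P.domain) :
    papp P (x + y) = papp P x + papp P y := by
  rw [papp_of_mem P hx, papp_of_mem P hy, papp_of_mem P (P.domain.add_mem hx hy)]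
  exact P.toFun.map_add ⟨x, hx⟩ ⟨y, hy⟩

theorem papp_smul (c : ℂ) {x : H} (hx : x ∈ P.domain) :
    papp P (c • x) = c • papp P x := by
  rw [papp_of_mem P hx, papp_of_mem P (P.domain.smul_mem c hx)]
  exact P.toFun.map_smul c ⟨x, hx⟩

theorem papp_neg {x : H} (hx : x ∈ P.domain) : papp P (-x) = -papp P x := by
  have := papp_smul P (-1 : ℂ) hx
  simpa using this

theorem papp_sub {x y : H} (hx : x ∈ P.domain) (hy : y ∈ P.domain) :
    papp P (x - y) = papp P x - papp P y := by
  rw [sub_eq_add_neg, sub_eq_add_neg, papp_add P hx (P.domain.neg_mem hy), papp_neg P hy]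

theorem mem_pdom_one {x : H} : x ∈ pdom P 1 ↔ x ∈ P.domain := by
  constructor
  · intro h; simpa using h 0 one_pos
  · intro h j hj
    interval_cases j
    simpa using h

theorem mem_smoothDom {x : H} : x ∈ smoothDom P ↔ ∀ j, (papp P)^[j] x ∈ P.domain := by
  constructor
  · intro h j
    have := Set.mem_iInter₂.mp h (j + 1) (Nat.succ_le_succ (Nat.zero_le j))
    exact this j (Nat.lt_succ_self j)
  · intro h
    exact Set.mem_iInter₂.mpr fun k _ j _ => h j

theorem smooth_mem_domain {x : H} (h : x ∈ smoothDom P) : x ∈ P.domain := by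
  simpa using (mem_smoothDom P).mp h 0

theorem smooth_papp_mem {x : H} (h : x ∈ smoothDom P) : papp P x ∈ smoothDom P := by
  rw [mem_smoothDom] at h ⊢
  intro j
  rw [← Function.iterate_succ_apply]
  exact h (j + 1)

theorem iter_add {x y : H} (hx : x ∈ smoothDom P) (hy : y ∈ smoothDom P) :
    ∀ j, (papp P)^[j] (x + y) = (papp P)^[j] x + (papp P)^[j] y := by
  intro j
  induction j generalizing x y with
  | zero => simp
  | succ j ih =>
    rw [Function.iterate_succ_apply, Function.iterate_succ_apply, Function.iterate_succ_apply,
      papp_add P (smooth_mem_domain P hx) (smooth_mem_domain P hy)]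
    exact ih (smooth_papp_mem P hx) (smooth_papp_mem P hy)

theorem iter_smul (c : ℂ) {x : H} (hx : x ∈ smoothDom P) :
    ∀ j, (papp P)^[j] (c • x) = c • (papp P)^[j] x := by
  intro j
  induction j generalizing x with
  | zero => simp
  | succ j ih =>
    rw [Function.iterate_succ_apply, Function.iterate_succ_apply,
      papp_smul P c (smooth_mem_domain P hx)]
    exact ih (smooth_papp_mem P hx)

theorem smooth_add {x y : H} (hx : x ∈ smoothDom P) (hy : y ∈ smoothDom P) :
    x + y ∈ smoothDom P := by
  rw [mem_smoothDom]
  intro j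
  rw [iter_add P hx hy j]
  exact P.domain.add_mem ((mem_smoothDom P).mp hx j) ((mem_smoothDom P).mp hy j)

theorem smooth_smul (c : ℂ) {x : H} (hx : x ∈ smoothDom P) : c • x ∈ smoothDom P := by
  rw [mem_smoothDom]
  intro j
  rw [iter_smul P c hx j]
  exact P.domain.smul_mem c ((mem_smoothDom P).mp hx j)

theorem smooth_zero : (0 : H) ∈ smoothDom P := by
  rw [mem_smoothDom]
  intro j
  have : ∀ j, (papp P)^[j] (0 : H) = 0 := by
    intro j
    induction j with
    | zero => simp
    | succ j ih => rw [Function.iterate_succ_apply, papp_zero]; exact ih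
  rw [this j]
  exact P.domain.zero_mem

/-- The smooth domain as a submodule. -/
def SD : Submodule ℂ H where
  carrier := smoothDom P
  zero_mem' := smooth_zero P
  add_mem' := fun hx hy => smooth_add P hx hy
  smul_mem' := smooth_smul P


section SelfAdj
variable {P : H →ₗ.[ℂ] H} (hP : IsSelfAdjoint P)

local notation "⟪" x ", " y "⟫" => @inner ℂ _ _ x y

include hP

theorem dense_dom : Dense (P.domain : Set H) := hP.dense_domain

theorem adj_le : P.adjoint ≤ P := le_of_eq (LinearPMap.isSelfAdjoint_def.mp hP)
theorem le_adj : P ≤ P.adjoint := le_of_eq (LinearPMap.isSelfAdjoint_def.mp hP).symm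

theorem symm_papp {x y : H} (hx : x ∈ P.domain) (hy : y ∈ P.domain) :
    ⟪papp P x, y⟫ = ⟪x, papp P y⟫ := by
  have hx' : x ∈ P.adjoint.domain := (le_adj hP).1 hx
  have h := LinearPMap.adjoint_isFormalAdjoint (dense_dom hP) ⟨x, hx'⟩ ⟨y, hy⟩
  have hval : P.adjoint ⟨x, hx'⟩ = P ⟨x, hx⟩ := (adj_le hP).2 rfl
  rw [hval] at h
  rw [papp_of_mem P hx, papp_of_mem P hy]
  exact h

theorem mem_of_inner_eq {x y : H} (h : ∀ v ∈ P.domain, ⟪y, v⟫ = ⟪x, papp P v⟫) :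
    x ∈ P.domain ∧ papp P x = y := by
  have hx' : x ∈ P.adjoint.domain := by
    apply LinearPMap.mem_adjoint_domain_of_exists
    exact ⟨y, fun v => by rw [h v v.2, papp_of_mem P v.2]⟩
  have hx : x ∈ P.domain := (adj_le hP).1 hx'
  refine ⟨hx, ?_⟩
  have hval : P.adjoint ⟨x, hx'⟩ = y := by
    apply LinearPMap.adjoint_apply_eq (dense_dom hP)
    intro v
    rw [h v v.2, papp_of_mem P v.2]
  have : P.adjoint ⟨x, hx'⟩ = P ⟨x, hx⟩ := (adj_le hP).2 rfl
  rw [papp_of_mem P hx, ← this, hval]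

/-- Closedness of `P`, in sequence form. -/
theorem closed_limit {u : ℕ → H} (hu : ∀ m, u m ∈ P.domain) {x w : H}
    (h1 : Filter.Tendsto u Filter.atTop (nhds x))
    (h2 : Filter.Tendsto (fun m => papp P (u m)) Filter.atTop (nhds w)) :
    x ∈ P.domain ∧ papp P x = w := by
  apply mem_of_inner_eq hP
  intro v hv
  have l1 : Filter.Tendsto (fun m => ⟪papp P (u m), v⟫) Filter.atTop (nhds ⟪w, v⟫) :=
    (h2.inner tendsto_const_nhds)
  have l2 : Filter.Tendsto (fun m => ⟪u m, papp P v⟫) Filter.atTop (nhds ⟪x, papp P v⟫) :=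
    (h1.inner tendsto_const_nhds)
  have heq : (fun m => ⟪papp P (u m), v⟫) = fun m => ⟪u m, papp P v⟫ := by
    funext m; exact symm_papp hP (hu m) hv
  rw [heq] at l1
  exact tendsto_nhds_unique l1 l2

end SelfAdj

section Inverse
variable {P : H →ₗ.[ℂ] H} (hP : IsSelfAdjoint P)

local notation "⟪" x ", " y "⟫" => @inner ℂ _ _ x y

/-- The graph of `P` inside the Hilbert space `WithLp 2 (H × H)`. -/
def G (P : H →ₗ.[ℂ] H) : Submodule ℂ (WithLp 2 (H × H)) :=
  P.graph.comap (WithLp.linearEquiv 2 ℂ (H × H)).toLinearMap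

theorem mem_G {P : H →ₗ.[ℂ] H} {z : WithLp 2 (H × H)} :
    z ∈ G P ↔ z.fst ∈ P.domain ∧ papp P z.fst = z.snd := by
  constructor
  · intro h
    obtain ⟨y, hy1, hy2⟩ := (LinearPMap.mem_graph_iff P).mp h
    have hy1' : (y : H) = z.fst := hy1
    refine ⟨hy1' ▸ y.2, ?_⟩
    rw [← hy1', papp_of_mem P y.2]
    exact hy2
  · rintro ⟨h1, h2⟩
    refine (LinearPMap.mem_graph_iff P).mpr ⟨⟨z.fst, h1⟩, rfl, ?_⟩
    rw [← papp_of_mem P h1]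
    exact h2

include hP

theorem G_closed : IsClosed (G P : Set (WithLp 2 (H × H))) := by
  apply IsSeqClosed.isClosed
  intro f z hf hz
  have cfst : Continuous fun w : WithLp 2 (H × H) => w.fst :=
    continuous_fst.comp (WithLp.prodContinuousLinearEquiv 2 ℂ H H).continuous
  have csnd : Continuous fun w : WithLp 2 (H × H) => w.snd :=
    continuous_snd.comp (WithLp.prodContinuousLinearEquiv 2 ℂ H H).continuous
  have h1 : Filter.Tendsto (fun m => (f m).fst) Filter.atTop (nhds z.fst) :=
    (cfst.continuousAt.tendsto).comp hz
  have h2 : Filter.Tendsto (fun m => (f m).snd) Filter.atTop (nhds z.snd) :=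
    (csnd.continuousAt.tendsto).comp hz
  have hmem : ∀ m, (f m).fst ∈ P.domain := fun m => (mem_G.mp (hf m)).1
  have hep : (fun m => papp P ((f m).fst)) = fun m => (f m).snd := by
    funext m; exact (mem_G.mp (hf m)).2
  have := closed_limit hP hmem h1 (by rw [hep]; exact h2)
  exact mem_G.mpr this

/-- The defining property of `(P^2+1)⁻¹`. -/
def Q (P : H →ₗ.[ℂ] H) (y c : H) : Prop :=
  c ∈ P.domain ∧ papp P c ∈ P.domain ∧ papp P (papp P c) + c = y

theorem Q_ex (y : H) : ∃ c, Q P y c := by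
  haveI : CompleteSpace (G P) := (G_closed hP).completeSpace_coe
  obtain ⟨g, hg, w, hw, hz⟩ :=
    (G P).exists_add_mem_mem_orthogonal ((WithLp.equiv 2 (H × H)).symm (0, y))
  obtain ⟨hg1, hg2⟩ := mem_G.mp hg
  -- w is in the orthogonal complement: w.snd ∈ dom P and papp P w.snd = -w.fst
  have hw' : ∀ v ∈ P.domain, ⟪(-w.fst : H), v⟫ = ⟪w.snd, papp P v⟫ := by
    intro v hv
    have hvG : ((WithLp.equiv 2 (H × H)).symm (v, papp P v)) ∈ G P := by
      apply mem_G.mpr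
      exact ⟨hv, rfl⟩
    have := (Submodule.mem_orthogonal (G P) w).mp hw _ hvG
    rw [WithLp.prod_inner_apply] at this
    have hfst : ((WithLp.equiv 2 (H × H)).symm (v, papp P v)).fst = v := rfl
    have hsnd : ((WithLp.equiv 2 (H × H)).symm (v, papp P v)).snd = papp P v := rfl
    change ⟪v, w.fst⟫ + ⟪papp P v, w.snd⟫ = 0 at this
    have := congrArg (starRingEnd ℂ) this
    rw [map_add, inner_conj_symm, inner_conj_symm, map_zero] at this
    rw [inner_neg_left]
    linear_combination -this
  obtain ⟨hwd, hwv⟩ := mem_of_inner_eq hP hw'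
  -- components of the decomposition
  have hz1 : (0 : H) = g.fst + w.fst := congrArg (fun z => z.fst) hz
  have hz2 : y = g.snd + w.snd := congrArg (fun z => z.snd) hz
  refine ⟨w.snd, hwd, ?_, ?_⟩
  · rw [hwv]
    have hgw : g.fst = -w.fst := eq_neg_of_add_eq_zero_left hz1.symm
    rw [← hgw]
    exact hg1
  · have hfw : papp P w.snd = g.fst := by
      rw [hwv, eq_comm]
      exact eq_neg_of_add_eq_zero_left hz1.symm
    rw [hfw, hg2, hz2]

theorem Q_uniq {y c c' : H} (h : Q P y c) (h' : Q P y c') : c = c' := by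
  obtain ⟨h1, h2, h3⟩ := h
  obtain ⟨h1', h2', h3'⟩ := h'
  set d := c - c' with hd
  have hd1 : d ∈ P.domain := P.domain.sub_mem h1 h1'
  have hdp : papp P d = papp P c - papp P c' := papp_sub P h1 h1'
  have hd2 : papp P d ∈ P.domain := by rw [hdp]; exact P.domain.sub_mem h2 h2'
  have hd3 : papp P (papp P d) + d = 0 := by
    rw [hdp, papp_sub P h2 h2', hd]
    linear_combination (norm := module) h3 - h3'
  have hinner : ⟪papp P (papp P d) + d, d⟫ = 0 := by rw [hd3, inner_zero_left]
  rw [inner_add_left, symm_papp hP hd2 hd1] at hinner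
  have h4' : ‖papp P d‖ ^ 2 + ‖d‖ ^ 2 = 0 := by
    have := congrArg (RCLike.re (K := ℂ)) hinner
    simpa [map_add, inner_self_eq_norm_sq, ← Complex.ofReal_pow] using this
  have h5 : ‖d‖ = 0 := by nlinarith [sq_nonneg ‖papp P d‖, norm_nonneg d]
  have : d = 0 := norm_eq_zero.mp h5
  exact sub_eq_zero.mp this

end Inverse

section Adef
variable {P : H →ₗ.[ℂ] H}

local notation "⟪" x ", " y "⟫" => @inner ℂ _ _ x y

theorem Q_add {y y' c c' : H} (h : Q P y c) (h' : Q P y' c') : Q P (y + y') (c + c') := by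
  obtain ⟨h1, h2, h3⟩ := h
  obtain ⟨h1', h2', h3'⟩ := h'
  refine ⟨P.domain.add_mem h1 h1', ?_, ?_⟩
  · rw [papp_add P h1 h1']; exact P.domain.add_mem h2 h2'
  · rw [papp_add P h1 h1', papp_add P h2 h2']
    linear_combination (norm := module) h3 + h3'

theorem Q_smul (c : ℂ) {y d : H} (h : Q P y d) : Q P (c • y) (c • d) := by
  obtain ⟨h1, h2, h3⟩ := h
  refine ⟨P.domain.smul_mem c h1, ?_, ?_⟩
  · rw [papp_smul P c h1]; exact P.domain.smul_mem c h2
  · rw [papp_smul P c h1, papp_smul P c h2, ← smul_add, h3]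

variable (hP : IsSelfAdjoint P)

/-- `(P^2+1)⁻¹` as a function. -/
def invA (hP : IsSelfAdjoint P) (y : H) : H := Classical.choose (Q_ex hP y)

theorem invA_spec (y : H) : Q P y (invA hP y) := Classical.choose_spec (Q_ex hP y)

theorem invA_norm (y : H) : ‖invA hP y‖ ≤ 1 * ‖y‖ := by
  set c := invA hP y with hc
  obtain ⟨h1, h2, h3⟩ := invA_spec hP y
  have hi : ⟪y, c⟫ = ⟪papp P c, papp P c⟫ + ⟪c, c⟫ := by
    rw [← h3, inner_add_left, symm_papp hP h2 h1]
  have hre : RCLike.re (K := ℂ) ⟪y, c⟫ = ‖papp P c‖ ^ 2 + ‖c‖ ^ 2 := by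
    rw [hi]; simp [map_add, inner_self_eq_norm_sq, ← Complex.ofReal_pow]
  have hle : RCLike.re (K := ℂ) ⟪y, c⟫ ≤ ‖y‖ * ‖c‖ :=
    (RCLike.re_le_norm _).trans (norm_inner_le_norm y c)
  have : ‖c‖ ^ 2 ≤ ‖y‖ * ‖c‖ := by nlinarith [sq_nonneg ‖papp P c‖]
  rcases eq_or_lt_of_le (norm_nonneg c) with h0 | h0
  · rw [← h0]; positivity
  · rw [one_mul]
    nlinarith

/-- `A := (P^2+1)⁻¹` as a continuous linear map. -/
def Aop (hP : IsSelfAdjoint P) : H →L[ℂ] H :=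
  LinearMap.mkContinuous
    { toFun := invA hP
      map_add' := fun y y' => Q_uniq hP (invA_spec hP (y + y'))
        (Q_add (invA_spec hP y) (invA_spec hP y'))
      map_smul' := fun c y => Q_uniq hP (invA_spec hP (c • y))
        (Q_smul c (invA_spec hP y)) }
    1 (invA_norm hP)

theorem Aop_spec (y : H) : Q P y (Aop hP y) := invA_spec hP y

theorem A_mem (y : H) : Aop hP y ∈ P.domain := (Aop_spec hP y).1
theorem A_mem2 (y : H) : papp P (Aop hP y) ∈ P.domain := (Aop_spec hP y).2.1
theorem A_eq (y : H) : papp P (papp P (Aop hP y)) + Aop hP y = y := (Aop_spec hP y).2.2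

theorem A_norm : ‖Aop hP‖ ≤ 1 :=
  LinearMap.mkContinuous_norm_le _ zero_le_one _

theorem A_papp2 (y : H) : papp P (papp P (Aop hP y)) = y - Aop hP y :=
  eq_sub_of_add_eq (A_eq hP y)

theorem A_comm {y : H} (hy : y ∈ P.domain) :
    papp P (Aop hP y) = Aop hP (papp P y) := by
  refine Q_uniq hP ?_ (Aop_spec hP (papp P y))
  refine ⟨A_mem2 hP y, ?_, ?_⟩
  · rw [A_papp2 hP y]; exact P.domain.sub_mem hy (A_mem hP y)
  · rw [A_papp2 hP y, papp_sub P hy (A_mem hP y)]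
    abel

theorem A_sym (x y : H) : ⟪Aop hP x, y⟫ = ⟪x, Aop hP y⟫ := by
  set c := Aop hP x
  set c' := Aop hP y
  have hx := A_eq hP x
  have hy := A_eq hP y
  calc ⟪c, y⟫ = ⟪c, papp P (papp P c') + c'⟫ := by rw [A_eq hP y]
    _ = ⟪c, papp P (papp P c')⟫ + ⟪c, c'⟫ := inner_add_right _ _ _
    _ = ⟪papp P c, papp P c'⟫ + ⟪c, c'⟫ := by
        rw [symm_papp hP (A_mem hP x) (A_mem2 hP y)]
    _ = ⟪papp P (papp P c), c'⟫ + ⟪c, c'⟫ := by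
        rw [symm_papp hP (A_mem2 hP x) (A_mem hP y)]
    _ = ⟪papp P (papp P c) + c, c'⟫ := (inner_add_left _ _ _).symm
    _ = ⟪x, c'⟫ := by rw [A_eq hP x]

theorem A_inner (y : H) :
    RCLike.re (K := ℂ) ⟪Aop hP y, y⟫ = ‖papp P (Aop hP y)‖ ^ 2 + ‖Aop hP y‖ ^ 2 := by
  set c := Aop hP y
  have hi : ⟪c, y⟫ = ⟪papp P c, papp P c⟫ + ⟪c, c⟫ := by
    calc ⟪c, y⟫ = ⟪c, papp P (papp P c) + c⟫ := by rw [A_eq hP y]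
      _ = ⟪c, papp P (papp P c)⟫ + ⟪c, c⟫ := inner_add_right _ _ _
      _ = ⟪papp P c, papp P c⟫ + ⟪c, c⟫ := by
          rw [symm_papp hP (A_mem hP y) (A_mem2 hP y)]
  rw [hi]
  simp [map_add, inner_self_eq_norm_sq, ← Complex.ofReal_pow]

theorem A_selfAdjoint : IsSelfAdjoint (Aop hP) :=
  ContinuousLinearMap.isSelfAdjoint_iff_isSymmetric.mpr fun x y => A_sym hP x y

theorem A_nonneg : (0 : H →L[ℂ] H) ≤ Aop hP := by
  rw [ContinuousLinearMap.nonneg_iff_isPositive]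
  refine ⟨ContinuousLinearMap.isSelfAdjoint_iff_isSymmetric.mp (A_selfAdjoint hP), fun x => ?_⟩
  rw [ContinuousLinearMap.reApplyInnerSelf_apply, A_inner hP x]
  positivity

theorem A_spectrum_nonneg : ∀ l ∈ spectrum ℝ (Aop hP), 0 ≤ l := fun _ hl =>
  spectrum_nonneg_of_nonneg (A_nonneg hP) hl

theorem A_inj {y : H} (h : Aop hP y = 0) : y = 0 := by
  have := A_eq hP y
  rw [h, papp_zero, papp_zero, add_zero] at this
  exact this.symm

theorem pow_mem : ∀ (k : ℕ) (y : H), y ∈ P.domain →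
    (Aop hP ^ k) y ∈ P.domain ∧ papp P ((Aop hP ^ k) y) = (Aop hP ^ k) (papp P y) := by
  intro k
  induction k with
  | zero =>
    intro y hy
    rw [pow_zero]
    exact ⟨by rw [ContinuousLinearMap.one_apply]; exact hy,
      by rw [ContinuousLinearMap.one_apply, ContinuousLinearMap.one_apply]⟩
  | succ k ih =>
    intro y hy
    have happ : ∀ z : H, (Aop hP ^ (k + 1)) z = (Aop hP ^ k) (Aop hP z) := by
      intro z; rw [pow_succ]; rfl
    rw [happ y, happ (papp P y)]
    obtain ⟨m1, e1⟩ := ih (Aop hP y) (A_mem hP y)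
    refine ⟨m1, ?_⟩
    rw [e1, A_comm hP hy]

theorem pow_pdom : ∀ (k : ℕ) (w : H) (j : ℕ), j < k →
    (papp P)^[j] ((Aop hP ^ k) w) ∈ P.domain := by
  intro k
  induction k with
  | zero => intro w j hj; omega
  | succ k ih =>
    intro w j hj
    match j with
    | 0 =>
      simp only [Function.iterate_zero, id]
      have : (Aop hP ^ (k + 1)) w = Aop hP ((Aop hP ^ k) w) := by rw [pow_succ']; rfl
      rw [this]; exact A_mem hP _
    | j + 1 =>
      rw [Function.iterate_succ_apply]
      have h1 : (Aop hP ^ (k + 1)) w = (Aop hP ^ k) (Aop hP w) := by rw [pow_succ]; rfl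
      have h2 : papp P ((Aop hP ^ k) (Aop hP w)) = (Aop hP ^ k) (papp P (Aop hP w)) :=
        (pow_mem hP k (Aop hP w) (A_mem hP w)).2
      rw [h1, h2]
      exact ih _ j (by omega)

theorem pow_mem_smooth_aux (w : H) (m : ℕ) : (Aop hP ^ m) w ∈ pdom P m :=
  fun j hj => pow_pdom hP m w j hj

end Adef

section Gfun
open Real

/-- `gk n k x = exp(-1/((n+1)x))/x^k` for `x > 0`, `0` otherwise. -/
def gk (n k : ℕ) (x : ℝ) : ℝ :=
  if 0 < x then Real.exp (-(((n : ℝ) + 1) * x)⁻¹) / x ^ k else 0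

theorem gk_nonneg (n k : ℕ) (x : ℝ) : 0 ≤ gk n k x := by
  unfold gk
  split
  · rename_i hx
    positivity
  · exact le_refl 0

theorem gk_zero (n k : ℕ) {x : ℝ} (hx : ¬0 < x) : gk n k x = 0 := if_neg hx

theorem gk_le_one (n : ℕ) (x : ℝ) : gk n 0 x ≤ 1 := by
  unfold gk
  split
  · rename_i hx
    rw [pow_zero, div_one]
    rw [Real.exp_le_one_iff, neg_nonpos]
    positivity
  · norm_num

theorem gk_le (n k : ℕ) {x : ℝ} (hx : 0 < x) :
    gk n k x ≤ (((k : ℝ) + 1) * ((n : ℝ) + 1)) ^ (k + 1) * x := by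
  set s : ℝ := (((n : ℝ) + 1) * x)⁻¹ with hs
  have hs0 : 0 < s := by positivity
  have hexp : (s / ((k : ℝ) + 1)) ^ (k + 1) ≤ Real.exp s := by
    have h1 : Real.exp s = Real.exp (s / ((k : ℝ) + 1)) ^ (k + 1) := by
      rw [← Real.exp_nat_mul]
      congr 1
      field_simp
      norm_cast
    rw [h1]
    apply pow_le_pow_left₀ (by positivity)
    calc s / ((k : ℝ) + 1) ≤ s / ((k : ℝ) + 1) + 1 := by linarith
      _ ≤ Real.exp (s / ((k : ℝ) + 1)) := Real.add_one_le_exp _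
  have hexppos : (0 : ℝ) < (s / ((k : ℝ) + 1)) ^ (k + 1) := by positivity
  have h2 : Real.exp (-s) ≤ (((k : ℝ) + 1) * (((n : ℝ) + 1) * x)) ^ (k + 1) := by
    rw [Real.exp_neg]
    have h3 : ((s / ((k : ℝ) + 1)) ^ (k + 1))⁻¹ = (((k : ℝ) + 1) / s) ^ (k + 1) := by
      rw [← inv_pow, inv_div]
    have h4 : ((k : ℝ) + 1) / s = ((k : ℝ) + 1) * (((n : ℝ) + 1) * x) := by
      rw [hs, div_eq_mul_inv, inv_inv]
    calc (Real.exp s)⁻¹ ≤ ((s / ((k : ℝ) + 1)) ^ (k + 1))⁻¹ := by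
          gcongr
      _ = (((k : ℝ) + 1) * (((n : ℝ) + 1) * x)) ^ (k + 1) := by rw [h3, h4]
  have hgk : gk n k x = Real.exp (-s) / x ^ k := by rw [gk, if_pos hx]
  rw [hgk]
  calc Real.exp (-s) / x ^ k
      ≤ (((k : ℝ) + 1) * (((n : ℝ) + 1) * x)) ^ (k + 1) / x ^ k := by gcongr
    _ = (((k : ℝ) + 1) * ((n : ℝ) + 1)) ^ (k + 1) * x := by
        rw [show ((k : ℝ) + 1) * (((n : ℝ) + 1) * x) = (((k : ℝ) + 1) * ((n : ℝ) + 1)) * x by ring,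
          mul_pow]
        rw [pow_succ ((x : ℝ)) k]
        field_simp

theorem gk_abs_le (n k : ℕ) (x : ℝ) :
    |gk n k x| ≤ (((k : ℝ) + 1) * ((n : ℝ) + 1)) ^ (k + 1) * |x| := by
  rcases lt_or_ge 0 x with hx | hx
  · rw [abs_of_nonneg (gk_nonneg n k x), abs_of_pos hx]
    exact gk_le n k hx
  · rw [gk_zero n k (not_lt.mpr hx), abs_zero]
    positivity

theorem gk_cont (n k : ℕ) : Continuous (gk n k) := by
  rw [continuous_iff_continuousAt]
  intro x
  rcases lt_trichotomy x 0 with hx | hx | hx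
  · have : (gk n k) =ᶠ[nhds x] fun _ => 0 := by
      filter_upwards [Iio_mem_nhds hx] with y hy
      exact gk_zero n k (not_lt.mpr (le_of_lt hy))
    exact ContinuousAt.congr (continuousAt_const) this.symm
  · subst hx
    have h0 : gk n k 0 = 0 := gk_zero n k (lt_irrefl 0)
    rw [ContinuousAt, h0]
    have hb : Filter.Tendsto (fun y : ℝ => (((k : ℝ) + 1) * ((n : ℝ) + 1)) ^ (k + 1) * |y|)
        (nhds 0) (nhds 0) := by
      have h := (continuous_abs.const_smul
        ((((k : ℝ) + 1) * ((n : ℝ) + 1)) ^ (k + 1))).tendsto (0 : ℝ)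
      simpa [Pi.smul_def] using h
    apply squeeze_zero_norm (fun y => ?_) hb
    simpa using gk_abs_le n k y
  · have hcont : ContinuousAt (fun y : ℝ => Real.exp (-(((n : ℝ) + 1) * y)⁻¹) / y ^ k) x := by
      apply ContinuousAt.div
      · apply Real.continuous_exp.continuousAt.comp
        apply ContinuousAt.neg
        apply ContinuousAt.inv₀
        · fun_prop
        · positivity
      · fun_prop
      · positivity
    apply hcont.congr
    filter_upwards [Ioi_mem_nhds hx] with y hy
    rw [gk, if_pos (Set.mem_Ioi.mp hy)]

theorem gk_mul (n k : ℕ) (x : ℝ) : x ^ k * gk n k x = gk n 0 x := by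
  rcases lt_or_ge 0 x with hx | hx
  · rw [gk, gk, if_pos hx, if_pos hx, pow_zero, div_one]
    field_simp
  · rw [gk_zero n k (not_lt.mpr hx), gk_zero n 0 (not_lt.mpr hx), mul_zero]

theorem gk_one_sub (n : ℕ) {x : ℝ} (hx : 0 ≤ x) :
    |(gk n 0 x - 1) * x| ≤ ((n : ℝ) + 1)⁻¹ := by
  rcases eq_or_lt_of_le hx with h0 | h0
  · rw [← h0, mul_zero, abs_zero]
    positivity
  · have hs0 : (0 : ℝ) < (((n : ℝ) + 1) * x)⁻¹ := by positivity
    have hg : gk n 0 x = Real.exp (-(((n : ℝ) + 1) * x)⁻¹) := by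
      rw [gk, if_pos h0, pow_zero, div_one]
    have h1 : 1 - gk n 0 x ≤ (((n : ℝ) + 1) * x)⁻¹ := by
      rw [hg]
      have := Real.add_one_le_exp (-(((n : ℝ) + 1) * x)⁻¹)
      linarith
    have h2 : 0 ≤ 1 - gk n 0 x := by linarith [gk_le_one n x]
    rw [abs_mul, abs_of_pos h0, abs_of_nonpos (by linarith : gk n 0 x - 1 ≤ 0)]
    have : (1 - gk n 0 x) * x ≤ (((n : ℝ) + 1) * x)⁻¹ * x := by
      apply mul_le_mul_of_nonneg_right h1 (le_of_lt h0)
    calc -(gk n 0 x - 1) * x = (1 - gk n 0 x) * x := by ring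
      _ ≤ (((n : ℝ) + 1) * x)⁻¹ * x := this
      _ = ((n : ℝ) + 1)⁻¹ := by
          rw [mul_inv]
          field_simp

end Gfun

section CFC
variable {P : H →ₗ.[ℂ] H} (hP : IsSelfAdjoint P)

open Polynomial

theorem real_smul_papp {a : ℝ} {x : H} (hx : x ∈ P.domain) :
    a • x ∈ P.domain ∧ papp P (a • x) = a • papp P x := by
  have h : a • x = ((a : ℂ)) • x := (algebraMap_smul ℂ a x).symm
  have h' : a • papp P x = ((a : ℂ)) • papp P x := (algebraMap_smul ℂ a (papp P x)).symm
  rw [h, h']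
  exact ⟨P.domain.smul_mem _ hx, papp_smul P _ hx⟩

theorem aeval_comm (q : ℝ[X]) {y : H} (hy : y ∈ P.domain) :
    (aeval (Aop hP) q) y ∈ P.domain ∧
      papp P ((aeval (Aop hP) q) y) = (aeval (Aop hP) q) (papp P y) := by
  induction q using Polynomial.induction_on' with
  | add p q hp hq =>
    rw [map_add]
    have hadd : ∀ z : H, (aeval (Aop hP) p + aeval (Aop hP) q) z
        = (aeval (Aop hP) p) z + (aeval (Aop hP) q) z := fun z => rfl
    rw [hadd, hadd]
    refine ⟨P.domain.add_mem hp.1 hq.1, ?_⟩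
    rw [papp_add P hp.1 hq.1, hp.2, hq.2]
  | monomial m a =>
    rw [aeval_monomial]
    have happ : ∀ z : H, (algebraMap ℝ (H →L[ℂ] H) a * Aop hP ^ m) z
        = a • ((Aop hP ^ m) z) := by
      intro z
      rw [ContinuousLinearMap.mul_apply, Algebra.algebraMap_eq_smul_one]
      simp
    rw [happ, happ]
    obtain ⟨m1, e1⟩ := pow_mem hP m y hy
    obtain ⟨m2, e2⟩ := real_smul_papp (P := P) (a := a) m1
    refine ⟨m2, ?_⟩
    rw [e2, e1]

theorem poly_approx {f : ℝ → ℝ} (hf : Continuous f) {ε : ℝ} (hε : 0 < ε) :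
    ∃ q : ℝ[X], ∀ x ∈ spectrum ℝ (Aop hP), |f x - q.eval x| ≤ ε := by
  set X : Set ℝ := spectrum ℝ (Aop hP)
  haveI : CompactSpace X := by infer_instance
  set f' : C(X, ℝ) := ContinuousMap.restrict X ⟨f, hf⟩
  have hmem : f' ∈ (polynomialFunctions X).topologicalClosure := by
    rw [polynomialFunctions.topologicalClosure X]
    trivial
  have hmem' : f' ∈ closure (polynomialFunctions X : Set C(X, ℝ)) := hmem
  obtain ⟨g, hg, hdist⟩ := Metric.mem_closure_iff.mp hmem' ε hε
  rw [polynomialFunctions_coe] at hg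
  obtain ⟨q, hq⟩ := hg
  subst hq
  refine ⟨q, fun x hx => ?_⟩
  have := ContinuousMap.dist_apply_le_dist (f := f')
    (g := (Polynomial.toContinuousMapOnAlgHom X) q) ⟨x, hx⟩
  have hfx : f' ⟨x, hx⟩ = f x := rfl
  have hgx : (Polynomial.toContinuousMapOnAlgHom X q) ⟨x, hx⟩ = q.eval x := rfl
  rw [hfx, hgx] at this
  calc |f x - q.eval x| = dist (f x) (q.eval x) := (Real.dist_eq _ _).symm
    _ ≤ dist f' ((Polynomial.toContinuousMapOnAlgHom X) q) := this
    _ ≤ ε := le_of_lt hdist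

theorem cfc_comm_papp {f : ℝ → ℝ} (hf : Continuous f) {x : H} (hx : x ∈ P.domain) :
    cfc f (Aop hP) x ∈ P.domain ∧
      papp P (cfc f (Aop hP) x) = cfc f (Aop hP) (papp P x) := by
  have hsa : IsSelfAdjoint (Aop hP) := A_selfAdjoint hP
  -- choose approximating polynomials
  have hq : ∀ m : ℕ, ∃ q : ℝ[X], ∀ y ∈ spectrum ℝ (Aop hP),
      |f y - q.eval y| ≤ 1 / ((m : ℝ) + 1) :=
    fun m => poly_approx hP hf (by positivity)
  choose q hq using hq
  have hnorm : ∀ m : ℕ, ‖cfc f (Aop hP) - aeval (Aop hP) (q m)‖ ≤ 1 / ((m : ℝ) + 1) := by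
    intro m
    have h1 : cfc (fun y => f y - (q m).eval y) (Aop hP)
        = cfc f (Aop hP) - aeval (Aop hP) (q m) := by
      rw [cfc_sub f (q m).eval (Aop hP) hf.continuousOn ((q m).continuous).continuousOn,
        cfc_polynomial (q m) (Aop hP) (A_selfAdjoint hP)]
    rw [← h1]
    apply norm_cfc_le (by positivity)
    intro y hy
    rw [Real.norm_eq_abs]
    exact hq m y hy
  -- pointwise convergence
  have hconv : ∀ v : H, Filter.Tendsto (fun m => (aeval (Aop hP) (q m)) v)
      Filter.atTop (nhds (cfc f (Aop hP) v)) := by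
    intro v
    rw [tendsto_iff_norm_sub_tendsto_zero]
    have hbound : ∀ m : ℕ, ‖(aeval (Aop hP) (q m)) v - cfc f (Aop hP) v‖
        ≤ (1 / ((m : ℝ) + 1)) * ‖v‖ := by
      intro m
      have : (aeval (Aop hP) (q m)) v - cfc f (Aop hP) v
          = -((cfc f (Aop hP) - aeval (Aop hP) (q m)) v) := by
        simp [ContinuousLinearMap.sub_apply]
      rw [this, norm_neg]
      calc ‖(cfc f (Aop hP) - aeval (Aop hP) (q m)) v‖
          ≤ ‖cfc f (Aop hP) - aeval (Aop hP) (q m)‖ * ‖v‖ :=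
            ContinuousLinearMap.le_opNorm _ v
        _ ≤ (1 / ((m : ℝ) + 1)) * ‖v‖ := by
            apply mul_le_mul_of_nonneg_right (hnorm m) (norm_nonneg v)
    apply squeeze_zero (fun m => norm_nonneg _) hbound
    have := tendsto_one_div_add_atTop_nhds_zero_nat.mul_const ‖v‖
    simpa using this
  have hu : ∀ m : ℕ, (aeval (Aop hP) (q m)) x ∈ P.domain := fun m =>
    (aeval_comm hP (q m) hx).1
  have h2 : (fun m => papp P ((aeval (Aop hP) (q m)) x))
      = fun m => (aeval (Aop hP) (q m)) (papp P x) := by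
    funext m; exact (aeval_comm hP (q m) hx).2
  exact closed_limit hP hu (hconv x) (by rw [h2]; exact hconv (papp P x))

end CFC

section Approx
variable {P : H →ₗ.[ℂ] H} (hP : IsSelfAdjoint P)

local notation "⟪" x ", " y "⟫" => @inner ℂ _ _ x y

/-- The approximating operators `E n = g_n(A)`. -/
def Eop (hP : IsSelfAdjoint P) (n : ℕ) : H →L[ℂ] H := cfc (gk n 0) (Aop hP)

theorem E_norm (n : ℕ) : ‖Eop hP n‖ ≤ 1 := by
  apply norm_cfc_le zero_le_one
  intro y _
  rw [Real.norm_eq_abs, abs_of_nonneg (gk_nonneg n 0 y)]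
  exact gk_le_one n y

theorem E_factor (n k : ℕ) : Eop hP n = Aop hP ^ k * cfc (gk n k) (Aop hP) := by
  have h1 : Eop hP n = cfc (fun y : ℝ => y ^ k * gk n k y) (Aop hP) := by
    unfold Eop
    congr 1
    funext y
    rw [gk_mul]
  rw [h1, cfc_mul _ _ (Aop hP) (by fun_prop) ((gk_cont n k).continuousOn),
    cfc_pow_id (Aop hP) k (A_selfAdjoint hP)]

theorem E_smooth (n : ℕ) (x : H) : Eop hP n x ∈ smoothDom P := by
  apply Set.mem_iInter₂.mpr
  intro k _
  have : Eop hP n x = (Aop hP ^ k) (cfc (gk n k) (Aop hP) x) := by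
    rw [E_factor hP n k]; rfl
  rw [this]
  exact pow_mem_smooth_aux hP _ k

theorem E_comm (n : ℕ) {x : H} (hx : x ∈ P.domain) :
    Eop hP n x ∈ P.domain ∧ papp P (Eop hP n x) = Eop hP n (papp P x) :=
  cfc_comm_papp hP (gk_cont n 0) hx

theorem range_dense : Dense (Set.range (Aop hP) : Set H) := by
  set R : Submodule ℂ H := LinearMap.range (Aop hP : H →ₗ[ℂ] H)
  have hbot : Rᗮ = ⊥ := by
    rw [Submodule.eq_bot_iff]
    intro z hz
    have h0 : ⟪Aop hP z, z⟫ = 0 :=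
      (Submodule.mem_orthogonal R z).mp hz (Aop hP z) (LinearMap.mem_range_self _ z)
    have hre := A_inner hP z
    rw [h0, map_zero] at hre
    have hA0 : Aop hP z = 0 := by
      have : ‖Aop hP z‖ ^ 2 = 0 := by nlinarith [sq_nonneg ‖papp P (Aop hP z)‖]
      simpa using pow_eq_zero_iff (n := 2) (by norm_num) |>.mp this.symm.symm
    exact A_inj hP hA0
  have hcl := Submodule.orthogonal_orthogonal_eq_closure (K := R)
  rw [hbot, Submodule.bot_orthogonal_eq_top] at hcl
  have hd : Dense (R : Set H) :=
    Submodule.dense_iff_topologicalClosure_eq_top.mpr hcl.symm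
  have hcoe : (R : Set H) = Set.range (Aop hP) := LinearMap.coe_range _
  exact hcoe ▸ hd

theorem E_rate (n : ℕ) (w : H) :
    ‖Eop hP n (Aop hP w) - Aop hP w‖ ≤ ((n : ℝ) + 1)⁻¹ * ‖w‖ := by
  have hD : cfc (fun y : ℝ => (gk n 0 y - 1) * y) (Aop hP)
      = Eop hP n * Aop hP - Aop hP := by
    have h1 : (fun y : ℝ => (gk n 0 y - 1) * y) = fun y : ℝ => gk n 0 y * y - y := by
      funext y; ring
    rw [h1, cfc_sub (fun y : ℝ => gk n 0 y * y) (fun y : ℝ => y) (Aop hP)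
      (((gk_cont n 0).mul continuous_id).continuousOn) continuous_id.continuousOn,
      cfc_mul (gk n 0) (fun y : ℝ => y) (Aop hP)
      ((gk_cont n 0).continuousOn) continuous_id.continuousOn,
      cfc_id' ℝ (Aop hP) (A_selfAdjoint hP)]
    rfl
  have hDnorm : ‖cfc (fun y : ℝ => (gk n 0 y - 1) * y) (Aop hP)‖ ≤ ((n : ℝ) + 1)⁻¹ := by
    apply norm_cfc_le (by positivity)
    intro y hy
    rw [Real.norm_eq_abs]
    exact gk_one_sub n (A_spectrum_nonneg hP y hy)
  have happ : Eop hP n (Aop hP w) - Aop hP w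
      = (cfc (fun y : ℝ => (gk n 0 y - 1) * y) (Aop hP)) w := by
    rw [hD]; simp [ContinuousLinearMap.sub_apply, ContinuousLinearMap.mul_apply]
  rw [happ]
  calc ‖(cfc (fun y : ℝ => (gk n 0 y - 1) * y) (Aop hP)) w‖
      ≤ ‖cfc (fun y : ℝ => (gk n 0 y - 1) * y) (Aop hP)‖ * ‖w‖ :=
        ContinuousLinearMap.le_opNorm _ w
    _ ≤ ((n : ℝ) + 1)⁻¹ * ‖w‖ := mul_le_mul_of_nonneg_right hDnorm (norm_nonneg w)

theorem E_tendsto (v : H) :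
    Filter.Tendsto (fun n => Eop hP n v) Filter.atTop (nhds v) := by
  rw [Metric.tendsto_atTop]
  intro ε hε
  have hv : v ∈ closure (Set.range (Aop hP)) := (range_dense hP).closure_eq ▸ Set.mem_univ v
  obtain ⟨u, hu, hduv⟩ := Metric.mem_closure_iff.mp hv (ε / 3) (by linarith)
  obtain ⟨w, rfl⟩ := hu
  obtain ⟨N, hN⟩ := exists_nat_gt (3 * ‖w‖ / ε)
  refine ⟨N, fun n hn => ?_⟩
  have hrate : ((n : ℝ) + 1)⁻¹ * ‖w‖ < ε / 3 := by
    have hNpos : (0 : ℝ) < (n : ℝ) + 1 := by positivity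
    rw [inv_mul_lt_iff₀ hNpos]
    have h1 : (3 : ℝ) * ‖w‖ / ε < (n : ℝ) + 1 := by
      calc (3 : ℝ) * ‖w‖ / ε < N := hN
        _ ≤ (n : ℝ) := by exact_mod_cast hn
        _ ≤ (n : ℝ) + 1 := by linarith
    calc ‖w‖ = ε / 3 * (3 * ‖w‖ / ε) := by field_simp
      _ < ε / 3 * ((n : ℝ) + 1) := by
          apply mul_lt_mul_of_pos_left h1 (by linarith)
      _ = ((n : ℝ) + 1) * (ε / 3) := by ring
  have hdist : dist v (Aop hP w) < ε / 3 := hduv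
  rw [dist_eq_norm]
  calc ‖Eop hP n v - v‖
      ≤ ‖Eop hP n v - Eop hP n (Aop hP w)‖ + ‖Eop hP n (Aop hP w) - Aop hP w‖
        + ‖Aop hP w - v‖ := by
          have := norm_add₃_le (a := Eop hP n v - Eop hP n (Aop hP w))
            (b := Eop hP n (Aop hP w) - Aop hP w) (c := Aop hP w - v)
          simpa using this
    _ < ε / 3 + ε / 3 + ε / 3 := by
        have h1 : ‖Eop hP n v - Eop hP n (Aop hP w)‖ < ε / 3 := by
          calc ‖Eop hP n v - Eop hP n (Aop hP w)‖
              = ‖Eop hP n (v - Aop hP w)‖ := by rw [map_sub]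
            _ ≤ ‖Eop hP n‖ * ‖v - Aop hP w‖ := ContinuousLinearMap.le_opNorm _ _
            _ ≤ 1 * ‖v - Aop hP w‖ :=
                mul_le_mul_of_nonneg_right (E_norm hP n) (norm_nonneg _)
            _ = ‖v - Aop hP w‖ := one_mul _
            _ < ε / 3 := by rw [← dist_eq_norm]; exact hdist
        have h2 : ‖Eop hP n (Aop hP w) - Aop hP w‖ < ε / 3 :=
          lt_of_le_of_lt (E_rate hP n w) hrate
        have h3 : ‖Aop hP w - v‖ < ε / 3 := by
          rw [norm_sub_rev, ← dist_eq_norm]; exact hdist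
        exact add_lt_add (add_lt_add h1 h2) h3
    _ = ε := by ring

end Approx

section Extend
variable {P : H →ₗ.[ℂ] H}

theorem SD_dense (hP : IsSelfAdjoint P) :
    Dense ((SD P : Submodule ℂ H) : Set H) := fun x =>
  mem_closure_of_tendsto (E_tendsto hP x)
    (Filter.Eventually.of_forall fun n => E_smooth hP n x)

/-- The linear map on the smooth domain given by a smooth-bounded operator. -/
def sbLin (t : H → H) (ht : IsSmoothBounded P t) : (SD P) →ₗ[ℂ] H where
  toFun u := t u
  map_add' u v := ht.2.1 u u.2 v v.2
  map_smul' c u := ht.2.2.1 c u u.2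

/-- The continuous linear map on the smooth domain. -/
def sbCLM (t : H → H) (ht : IsSmoothBounded P t) : (SD P) →L[ℂ] H :=
  LinearMap.mkContinuous (sbLin t ht) (Classical.choose ht.2.2.2)
    (fun u => by
      have := Classical.choose_spec ht.2.2.2 u u.2
      exact this)

/-- The bounded extension of a smooth-bounded operator to all of `H`. -/
def extOp (hP : IsSelfAdjoint P) (t : H → H) (ht : IsSmoothBounded P t) : H →L[ℂ] H :=
  (sbCLM t ht).extend (Submodule.subtypeL (SD P))

theorem extOp_eq (hP : IsSelfAdjoint P) (t : H → H) (ht : IsSmoothBounded P t)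
    {u : H} (hu : u ∈ smoothDom P) :
    extOp hP t ht u = t u := by
  have h := ContinuousLinearMap.extend_eq (f := sbCLM t ht) (e := Submodule.subtypeL (SD P))
    (SD_dense hP).denseRange_val isUniformEmbedding_subtype_val.isUniformInducing
    (⟨u, hu⟩ : SD P)
  exact h

theorem key_step (hP : IsSelfAdjoint P) (t : H → H)
    (hiter : ∀ n : ℕ, IsSmoothBounded P ((commP P)^[n] t))
    (n : ℕ) {x : H} (hx : x ∈ P.domain) :
    extOp hP _ (hiter n) x ∈ P.domain ∧
      papp P (extOp hP _ (hiter n) x)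
        = extOp hP _ (hiter (n + 1)) x + extOp hP _ (hiter n) (papp P x) := by
  set Tn : ℕ → H →L[ℂ] H := fun j => extOp hP _ (hiter j) with hTn
  set u : ℕ → H := fun m => Eop hP m x with hu
  have hu_mem : ∀ m, u m ∈ smoothDom P := fun m => E_smooth hP m x
  have hpu_mem : ∀ m, papp P (u m) ∈ smoothDom P := fun m => smooth_papp_mem P (hu_mem m)
  have hT_mem : ∀ m, Tn n (u m) ∈ P.domain := by
    intro m
    rw [hTn]
    simp only []
    rw [extOp_eq hP _ (hiter n) (hu_mem m)]
    exact smooth_mem_domain P ((hiter n).1 (u m) (hu_mem m))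
  -- the commutator identity on the smooth domain
  have hcid : ∀ m, papp P (Tn n (u m)) = Tn (n + 1) (u m) + Tn n (papp P (u m)) := by
    intro m
    have e0 : Tn n (u m) = ((commP P)^[n] t) (u m) := extOp_eq hP _ (hiter n) (hu_mem m)
    have e1 : Tn (n + 1) (u m) = ((commP P)^[n + 1] t) (u m) :=
      extOp_eq hP _ (hiter (n + 1)) (hu_mem m)
    have e2 : Tn n (papp P (u m)) = ((commP P)^[n] t) (papp P (u m)) :=
      extOp_eq hP _ (hiter n) (hpu_mem m)
    have hc : ((commP P)^[n + 1] t) (u m)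
        = papp P (((commP P)^[n] t) (u m)) - ((commP P)^[n] t) (papp P (u m)) := by
      rw [Function.iterate_succ_apply' (commP P) n t]
      rfl
    rw [e0, e1, e2, hc]
    abel
  -- limits
  have l1 : Filter.Tendsto u Filter.atTop (nhds x) := E_tendsto hP x
  have l2 : Filter.Tendsto (fun m => papp P (u m)) Filter.atTop (nhds (papp P x)) := by
    have he : (fun m => papp P (u m)) = fun m => Eop hP m (papp P x) := by
      funext m
      exact (E_comm hP m hx).2
    rw [he]
    exact E_tendsto hP (papp P x)
  have lw : Filter.Tendsto (fun m => Tn n (u m)) Filter.atTop (nhds (Tn n x)) :=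
    ((Tn n).continuous.continuousAt.tendsto).comp l1
  have lpw : Filter.Tendsto (fun m => papp P (Tn n (u m))) Filter.atTop
      (nhds (Tn (n + 1) x + Tn n (papp P x))) := by
    have h1 : Filter.Tendsto (fun m => Tn (n + 1) (u m)) Filter.atTop
        (nhds (Tn (n + 1) x)) := ((Tn (n + 1)).continuous.continuousAt.tendsto).comp l1
    have h2 : Filter.Tendsto (fun m => Tn n (papp P (u m))) Filter.atTop
        (nhds (Tn n (papp P x))) := ((Tn n).continuous.continuousAt.tendsto).comp l2
    have h3 := h1.add h2
    apply h3.congr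
    intro m
    exact (hcid m).symm
  exact closed_limit hP hT_mem lw lpw

end Extend
end L131

/-- Connes' Lemma 13.1: let `P = |D|` (a nonnegative selfadjoint
operator) and let `T` be an `H_P^∞`-bounded operator with all iterated commutators
`δ'ⁿ(T) = [|D|,·]ⁿ(T)` again `H_P^∞`-bounded. Then the bounded closure `T̄` of `T`
lies in `⋂ₙ Dom δⁿ`: there is a chain `Tb n` of bounded operators with `Tb 0 = T̄`,
each `Tb n` preserving `Dom D` with `δ(Tb n) = Tb (n+1)`, and `δ(T̄)` is the closure
of `δ'(T)`. -/
theorem bounded_closure_in_dom_delta (P : H →ₗ.[ℂ] H) (hP : IsSelfAdjoint P)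
    (hPpos : ∀ x : P.domain, 0 ≤ (inner ℂ (P x) (x : H) : ℂ).re)
    (t : H → H) (ht : IsSmoothBounded P t)
    (hiter : ∀ n : ℕ, IsSmoothBounded P ((commP P)^[n] t)) :
    ∃ Tb : ℕ → (H →L[ℂ] H),
      (∀ x ∈ smoothDom P, Tb 0 x = t x) ∧
      (∀ n : ℕ, ∀ x ∈ pdom P 1, Tb n x ∈ pdom P 1 ∧
        Tb (n + 1) x = papp P (Tb n x) - Tb n (papp P x)) ∧
      (∀ x ∈ smoothDom P, Tb 1 x = papp P (t x) - t (papp P x)) := by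
  classical
  refine ⟨fun n => L131.extOp hP _ (hiter n), ?_, ?_, ?_⟩
  · intro x hx
    rw [L131.extOp_eq hP _ (hiter 0) hx]
    rfl
  · intro n x hx
    have hx' : x ∈ P.domain := (L131.mem_pdom_one P).mp hx
    obtain ⟨hmem, heq⟩ := L131.key_step hP t hiter n hx'
    refine ⟨(L131.mem_pdom_one P).mpr hmem, ?_⟩
    rw [heq]
    abel
  · intro x hx
    rw [L131.extOp_eq hP _ (hiter 1) hx]
    rfl

end
end

section
/- Let E_N be a finite-dimensional complex inner product space, S a selfadjoint idempotent endomorphism of E_N, and 𝔄 an invertible anti-selfadjoint endomorphism (𝔄* = -𝔄). If (1-S)𝔄(1-S) = 0 and S𝔄^{-1}S = 0, then the map Ψ := -(1-S)𝔄 restricted to the range of S is a linear isomorphism from ran(S) onto ran(1-S), with inverse given by -S𝔄^{-1} restricted to ran(1-S). -/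
open scoped InnerProductSpace

/-- Theorem 4.6(i), finite-dimensional core: if `S` is a selfadjoint idempotent and
`𝔄` an invertible anti-selfadjoint endomorphism with `(1-S)𝔄(1-S) = 0` and
`S𝔄⁻¹S = 0`, then `Ψ := -(1-S)𝔄` restricted to `ran S` is a linear isomorphism
onto `ran (1-S)`, with inverse `-S𝔄⁻¹` restricted to `ran (1-S)`. -/
theorem psi_isomorphism {E : Type*} [NormedAddCommGroup E] [InnerProductSpace ℂ E]
    [FiniteDimensional ℂ E] (S A B : E →ₗ[ℂ] E)
    (hSsym : S.IsSymmetric) (hSidem : S * S = S)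
    (hAanti : ∀ x y : E, ⟪A x, y⟫_ℂ = -⟪x, A y⟫_ℂ)
    (hAB : A * B = 1) (hBA : B * A = 1)
    (h1 : (1 - S) * A * (1 - S) = 0) (h2 : S * B * S = 0) :
    Set.MapsTo ⇑(-((1 - S) * A)) (LinearMap.range S : Set E) (LinearMap.range (1 - S) : Set E) ∧
    Set.MapsTo ⇑(-(S * B)) (LinearMap.range (1 - S) : Set E) (LinearMap.range S : Set E) ∧
    (∀ x ∈ LinearMap.range S, (-(S * B)) ((-((1 - S) * A)) x) = x) ∧
    (∀ y ∈ LinearMap.range (1 - S), (-((1 - S) * A)) ((-(S * B)) y) = y) := by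
  have k1 : (S * B) * ((1 - S) * A) = S := by
    have : (S * B) * ((1 - S) * A) = S * (B * A) - (S * B * S) * A := by noncomm_ring
    rw [this, hBA, h2]; simp
  have k2 : ((1 - S) * A) * (S * B) = 1 - S := by
    have : ((1 - S) * A) * (S * B) = (1 - S) * (A * B) - ((1 - S) * A * (1 - S)) * B := by
      noncomm_ring
    rw [this, hAB, h1]; simp
  have hS : ∀ x ∈ LinearMap.range S, S x = x := by
    rintro _ ⟨u, rfl⟩
    have := congrArg (fun T : E →ₗ[ℂ] E => T u) hSidem
    simpa using this
  have hS' : ∀ y ∈ LinearMap.range (1 - S), (1 - S) y = y := by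
    rintro _ ⟨u, rfl⟩
    have hid : (1 - S) * (1 - S) = 1 - S := by
      have : (1 - S) * (1 - S) = 1 - S - (S - S * S) := by noncomm_ring
      rw [this, hSidem]; simp
    have := congrArg (fun T : E →ₗ[ℂ] E => T u) hid
    simpa using this
  refine ⟨?_, ?_, ?_, ?_⟩
  · rintro x -
    exact ⟨-(A x), by simp; abel⟩
  · rintro y -
    exact ⟨-(B y), by simp⟩
  · intro x hx
    have e : (-(S * B)) ((-((1 - S) * A)) x) = ((S * B) * ((1 - S) * A)) x := by
      simp [Module.End.mul_apply]
    rw [e, k1]; exact hS x hx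
  · intro y hy
    have e : (-((1 - S) * A)) ((-(S * B)) y) = (((1 - S) * A) * (S * B)) y := by
      simp [Module.End.mul_apply]; abel
    rw [e, k2]; exact hS' y hy
end

section
/- Let H be a Hilbert space, P a selfadjoint operator, T = Sγ₀ a boundary operator determined by data such that a*Dom(P_T^k) is characterized by: ψ ∈ H^k and T(P₊^j ψ) = 0 for 0 ≤ j ≤ k-1. Suppose a is an operator satisfying: (a) Ta = a_N T for some boundary operator a_N, and (b) for all i ∈ ℕ there exist operators R_i with T dⁱ(a) = R_i T, where d(a) := [P₊, a]. Then using the identity [P₊^j, a] = Σ_{i=1}^{j} C(j,i) dⁱ(a) P₊^{j-i} (with binomial coefficients C(j,i)), one has T(P₊^j a ψ) = 0 for all 0 ≤ j ≤ k-1 whenever T(P₊^j ψ) = 0 for all 0 ≤ j ≤ k-1; hence a preserves Dom(P_T^k). -/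
/-- Abstract version of Lemma 4.5(i): if `T a = a_N T` and each iterated commutator
`dⁱ(a) = [P,·]ⁱ(a)` satisfies `T dⁱ(a) = Rᵢ T`, then, using the expansion
`[Pʲ, a] = Σᵢ C(j,i) dⁱ(a) P^{j-i}`, the vanishing of the traces `T(Pʲψ) = 0` for
`j < k` implies `T(Pʲ(aψ)) = 0` for `j < k`; hence `a` preserves `Dom P_T^k`. -/
theorem trace_vanishing_preserved {V W : Type*} [AddCommGroup V] [Module ℂ V]
    [AddCommGroup W] [Module ℂ W]
    (P a : Module.End ℂ V) (T : V →ₗ[ℂ] W)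
    (haN : ∃ aN : Module.End ℂ W, T ∘ₗ a = aN ∘ₗ T)
    (hR : ∀ i : ℕ, ∃ R : Module.End ℂ W,
      T ∘ₗ ((fun x : Module.End ℂ V => P * x - x * P)^[i] a) = R ∘ₗ T) :
    ∀ (k : ℕ) (ψ : V), (∀ j < k, T ((P ^ j) ψ) = 0) → ∀ j < k, T ((P ^ j) (a ψ)) = 0 := by
  set d : Module.End ℂ V → Module.End ℂ V := fun x => P * x - x * P with hd
  suffices h : ∀ j : ℕ, ∀ ψ : V, (∀ m ≤ j, T ((P ^ m) ψ) = 0) →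
      ∀ i : ℕ, T ((P ^ j) ((d^[i] a) ψ)) = 0 by
    intro k ψ hψ j hj
    have := h j ψ (fun m hm => hψ m (lt_of_le_of_lt hm hj)) 0
    simpa using this
  intro j
  induction j with
  | zero =>
    intro ψ hψ i
    obtain ⟨R, hRi⟩ := hR i
    have h0 : T ψ = 0 := by simpa using hψ 0 le_rfl
    have := LinearMap.congr_fun hRi ψ
    simpa [h0] using this
  | succ j ih =>
    intro ψ hψ i
    have key : (P ^ (j + 1)) ((d^[i] a) ψ)
        = (P ^ j) ((d^[i + 1] a) ψ) + (P ^ j) ((d^[i] a) (P ψ)) := by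
      have h1 : d^[i + 1] a = P * d^[i] a - d^[i] a * P := by
        rw [Function.iterate_succ_apply']
      have h2 : P * d^[i] a = d^[i + 1] a + d^[i] a * P := by
        rw [h1]; abel
      calc (P ^ (j + 1)) ((d^[i] a) ψ) = (P ^ j) ((P * d^[i] a) ψ) := by
            rw [pow_succ]; rfl
        _ = (P ^ j) (((d^[i + 1] a) + d^[i] a * P) ψ) := by rw [h2]
        _ = (P ^ j) ((d^[i + 1] a) ψ) + (P ^ j) ((d^[i] a) (P ψ)) := by
            simp [LinearMap.add_apply, Module.End.mul_apply]
    rw [key, map_add]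
    have hψ' : ∀ m ≤ j, T ((P ^ m) ψ) = 0 := fun m hm => hψ m (hm.trans (Nat.le_succ j))
    have hPψ : ∀ m ≤ j, T ((P ^ m) (P ψ)) = 0 := by
      intro m hm
      have : (P ^ m) (P ψ) = (P ^ (m + 1)) ψ := by rw [pow_succ]; rfl
      rw [this]
      exact hψ (m + 1) (Nat.succ_le_succ hm)
    rw [ih ψ hψ' (i + 1), ih (P ψ) hPψ i, add_zero]
end
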